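/- Let p ≥ 1 and q > p, and let T^p ⊂ ℓ^p(E) and T^q ⊂ ℓ^q(E) be the closures of the point sets P_u^p and P_u^q of the p- and q-parameterizations of a p-summable infinite tree (with the same root u). If there is a constant k > 0 such that d_p(x,y) ≤ k·d_∞(x,y) for all x, y ∈ T^p (where d_∞ is the metric from the sup norm), then the identity map on points extends to a bi-Lipschitz homeomorphism between T^p and T^q. -/
import Mathlib

open scoped ENNReal

lemma sum_rpow_le_rpow_sum' {ι : Type*} (s : Finset ι) (a : ι → ℝ) (ha : ∀ i ∈ s, 0 ≤ a i)
    {r : ℝ} (hr : 1 ≤ r) : ∑ i ∈ s, a i ^ r ≤ (∑ i ∈ s, a i) ^ r := by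
  have hS : 0 ≤ ∑ i ∈ s, a i := Finset.sum_nonneg ha
  have hrne : (1:ℝ) + (r - 1) ≠ 0 := by intro h; linarith [h]
  calc ∑ i ∈ s, a i ^ r ≤ ∑ i ∈ s, a i * (∑ j ∈ s, a j) ^ (r - 1) := by
        apply Finset.sum_le_sum
        intro i hi
        have h1 : a i ^ r = a i * a i ^ (r - 1) := by
          nth_rewrite 1 [show r = 1 + (r-1) by ring]
          rw [Real.rpow_add' (ha i hi) hrne, Real.rpow_one]
        rw [h1]
        exact mul_le_mul_of_nonneg_left
          (Real.rpow_le_rpow (ha i hi) (Finset.single_le_sum ha hi) (by linarith))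
          (ha i hi)
    _ = (∑ i ∈ s, a i) ^ r := by
        rw [← Finset.sum_mul]
        nth_rewrite 2 [show r = 1 + (r-1) by ring]
        rw [Real.rpow_add' hS hrne, Real.rpow_one]

/-- For a `p`-summable tree with point set `P` in `ℓ^p(E)` (canonical path
parameterization), if the `ℓ^p` metric is dominated on `T^p = closure P` by a constant
multiple of the sup metric `d_∞`, then the coordinatewise identity map extends to a
bi-Lipschitz homeomorphism from `T^p` onto `T^q`, for any `q > p`. -/
theorem tree_parameterizations_biLipschitz
    (E : Type*) [Countable E] [DecidableEq E]
    (p q : ℝ≥0∞) [Fact (1 ≤ p)] [Fact (1 ≤ q)] (hp : p ≠ ⊤) (hq : q ≠ ⊤) (hpq : p < q)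
    (ℓ : E → ℝ) (hpos : ∀ e, 0 < ℓ e)
    (hsum : Summable (fun e => ℓ e ^ p.toReal))
    (x : E → lp (fun _ : E => ℝ) p)
    (path : E → Finset E) (hself : ∀ e, e ∉ path e)
    (hx : ∀ e, x e = ∑ j ∈ path e, lp.single p j (ℓ j))
    (P : Set (lp (fun _ : E => ℝ) p))
    (hP : P = ⋃ e : E,
      (fun t : ℝ => x e + lp.single p e t) '' Set.Icc 0 (ℓ e))
    (k : ℝ) (hk : 0 < k)
    (hdom : ∀ a ∈ closure P, ∀ b ∈ closure P,
      dist a b ≤ k * ⨆ e : E, |(a : ∀ _ : E, ℝ) e - (b : ∀ _ : E, ℝ) e|) :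
    ∃ (K : ℝ) (Φ : closure P → lp (fun _ : E => ℝ) q),
      0 < K ∧
      (∀ a : closure P, ∀ e : E,
        ((Φ a : lp (fun _ : E => ℝ) q) : ∀ _ : E, ℝ) e =
          ((a : lp (fun _ : E => ℝ) p) : ∀ _ : E, ℝ) e) ∧
      Set.range Φ =
        closure {y : lp (fun _ : E => ℝ) q | ∃ a ∈ P,
          ∀ e : E, (y : ∀ _ : E, ℝ) e = (a : ∀ _ : E, ℝ) e} ∧
      ∀ a b : closure P,
        dist (Φ a) (Φ b) ≤ K * dist (a : lp (fun _ : E => ℝ) p) b ∧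
        dist (a : lp (fun _ : E => ℝ) p) (b : lp (fun _ : E => ℝ) p) ≤
          K * dist (Φ a) (Φ b) := by
  have hp1 : (1:ℝ≥0∞) ≤ p := Fact.out
  have hq1 : (1:ℝ≥0∞) ≤ q := Fact.out
  have hp0 : p ≠ 0 := by intro h; rw [h] at hp1; simp at hp1
  have hq0 : q ≠ 0 := by intro h; rw [h] at hq1; simp at hq1
  have hpr : 0 < p.toReal := ENNReal.toReal_pos hp0 hp
  have hqr : 0 < q.toReal := ENNReal.toReal_pos hq0 hq
  have hple : p.toReal ≤ q.toReal := (ENNReal.toReal_le_toReal hp hq).mpr hpq.le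
  have hr1 : 1 ≤ q.toReal / p.toReal := (one_le_div hpr).2 hple
  -- the inclusion map
  let ι : lp (fun _ : E => ℝ) p → lp (fun _ : E => ℝ) q := fun f =>
    ⟨(f : ∀ _ : E, ℝ), Memℓp.of_exponent_ge (lp.memℓp f) hpq.le⟩
  have hcoord : ∀ f : lp (fun _ : E => ℝ) p, ∀ e : E,
      ((ι f : lp (fun _ : E => ℝ) q) : ∀ _ : E, ℝ) e = (f : ∀ _ : E, ℝ) e := fun f e => rfl
  have hsub : ∀ f g : lp (fun _ : E => ℝ) p, ι f - ι g = ι (f - g) := fun f g => rfl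
  -- norm inequality ‖ι f‖_q ≤ ‖f‖_p
  have hnorm : ∀ f : lp (fun _ : E => ℝ) p, ‖ι f‖ ≤ ‖f‖ := by
    intro f
    apply lp.norm_le_of_forall_sum_le hqr (lp.norm_nonneg' f)
    intro s
    calc ∑ i ∈ s, ‖(f : ∀ _ : E, ℝ) i‖ ^ q.toReal
        = ∑ i ∈ s, (‖(f : ∀ _ : E, ℝ) i‖ ^ p.toReal) ^ (q.toReal / p.toReal) := by
          refine Finset.sum_congr rfl fun i _ => ?_
          rw [← Real.rpow_mul (norm_nonneg _)]
          congr 1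
          field_simp
      _ ≤ (∑ i ∈ s, ‖(f : ∀ _ : E, ℝ) i‖ ^ p.toReal) ^ (q.toReal / p.toReal) :=
          sum_rpow_le_rpow_sum' s _ (fun i _ => by positivity) hr1
      _ ≤ (‖f‖ ^ p.toReal) ^ (q.toReal / p.toReal) :=
          Real.rpow_le_rpow (Finset.sum_nonneg fun i _ => by positivity)
            (lp.sum_rpow_le_norm_rpow hpr f s) (by positivity)
      _ = ‖f‖ ^ q.toReal := by
          rw [← Real.rpow_mul (norm_nonneg _)]
          congr 1
          field_simp
  have hLip : ∀ f g : lp (fun _ : E => ℝ) p, dist (ι f) (ι g) ≤ dist f g := by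
    intro f g
    rw [dist_eq_norm, dist_eq_norm, hsub]
    exact hnorm _
  have hcont : Continuous ι := by
    apply LipschitzWith.continuous (K := 1)
    apply LipschitzWith.of_dist_le_mul
    intro f g
    simpa using hLip f g
  -- sup bound
  have hsup : ∀ f g : lp (fun _ : E => ℝ) p,
      (⨆ e : E, |(f : ∀ _ : E, ℝ) e - (g : ∀ _ : E, ℝ) e|) ≤ dist (ι f) (ι g) := by
    intro f g
    apply Real.iSup_le _ dist_nonneg
    intro e
    have h := lp.norm_apply_le_norm hq0 (ι f - ι g) e
    rw [dist_eq_norm]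
    calc |(f : ∀ _ : E, ℝ) e - (g : ∀ _ : E, ℝ) e|
        = ‖((ι f - ι g : lp (fun _ : E => ℝ) q) : ∀ _ : E, ℝ) e‖ := by
          rw [hsub]; rfl
      _ ≤ ‖ι f - ι g‖ := h
  -- the restricted map
  refine ⟨max k 1, fun a => ι a, lt_max_of_lt_right one_pos, fun a e => rfl, ?_, ?_⟩
  · -- range
    haveI : CompleteSpace (closure P) := isClosed_closure.completeSpace_coe
    have hQ : {y : lp (fun _ : E => ℝ) q | ∃ a ∈ P,
        ∀ e : E, (y : ∀ _ : E, ℝ) e = (a : ∀ _ : E, ℝ) e} = ι '' P := by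
      ext y
      constructor
      · rintro ⟨a, haP, hc⟩
        exact ⟨a, haP, by ext e; exact (hc e).symm⟩
      · rintro ⟨a, haP, rfl⟩
        exact ⟨a, haP, fun e => rfl⟩
    have hrange : Set.range (fun a : closure P => ι a) = ι '' closure P := by
      rw [show (fun a : closure P => ι (a : lp (fun _ : E => ℝ) p))
          = ι ∘ ((↑) : closure P → lp (fun _ : E => ℝ) p) from rfl,
        Set.range_comp, Subtype.range_coe]
    have hΦlip : LipschitzWith 1 (fun a : closure P => ι a) := by
      apply LipschitzWith.of_dist_le_mul
      intro a b
      rw [Subtype.dist_eq]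
      simpa using hLip a b
    have hanti : AntilipschitzWith ⟨k, hk.le⟩ (fun a : closure P => ι a) := by
      apply AntilipschitzWith.of_le_mul_dist
      intro a b
      rw [Subtype.dist_eq]
      calc dist (a : lp (fun _ : E => ℝ) p) b
          ≤ k * ⨆ e : E, |((a : lp (fun _ : E => ℝ) p) : ∀ _ : E, ℝ) e -
              ((b : lp (fun _ : E => ℝ) p) : ∀ _ : E, ℝ) e| := hdom a a.2 b b.2
        _ ≤ k * dist (ι a) (ι b) := by
            exact mul_le_mul_of_nonneg_left (hsup _ _) hk.le
    have hclosed : IsClosed (Set.range (fun a : closure P => ι a)) :=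
      hanti.isClosed_range hΦlip.uniformContinuous
    rw [hQ, hrange]
    apply Set.Subset.antisymm
    · exact image_closure_subset_closure_image hcont
    · rw [← hrange]
      apply closure_minimal _ hclosed
      rintro y ⟨a, haP, rfl⟩
      exact ⟨⟨a, subset_closure haP⟩, rfl⟩
  · -- bi-Lipschitz estimates
    intro a b
    constructor
    · calc dist (ι a) (ι b) ≤ dist (a : lp (fun _ : E => ℝ) p) b := hLip _ _
        _ ≤ max k 1 * dist (a : lp (fun _ : E => ℝ) p) b := by
            nlinarith [dist_nonneg (x := (a : lp (fun _ : E => ℝ) p)) (y := (b : lp (fun _ : E => ℝ) p)), le_max_right k 1]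
    · calc dist (a : lp (fun _ : E => ℝ) p) b
          ≤ k * ⨆ e : E, |((a : lp (fun _ : E => ℝ) p) : ∀ _ : E, ℝ) e -
              ((b : lp (fun _ : E => ℝ) p) : ∀ _ : E, ℝ) e| := hdom a a.2 b b.2
        _ ≤ k * dist (ι a) (ι b) := mul_le_mul_of_nonneg_left (hsup _ _) hk.le
        _ ≤ max k 1 * dist (ι a) (ι b) :=
            mul_le_mul_of_nonneg_right (le_max_left k 1) dist_nonneg
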